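/- Let S be a compact convex state space with effect set E_S (affine maps S→[0,1]), and let A = (a_x)_{x∈X} be a finite-outcome measurement (∑_x a_x = 1_S). If A is α-sharp (i.e., for all x ≠ x' and all effects b with b ≤ a_x and b ≤ a_{x'}, one has b ≤ (1−α)·1_S) and |X| = n, then A is (1 − (n²−n)(1−α))-intersubjective: every joint measurement B = (b_{x,x'})_{x,x'∈X} of A with itself satisfies ∑_x b_{x,x} ≥ (1 − (n²−n)(1−α))·1_S. -/
import Mathlib


open Finset

/-- An effect on the state space `S`: an affine map taking values in `[0,1]` on `S`. -/
def IsEffect {V : Type*} [AddCommGroup V] [Module ℝ V] (S : Set V) (a : V →ᵃ[ℝ] ℝ) : Prop :=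
  ∀ s ∈ S, 0 ≤ a s ∧ a s ≤ 1

/-- A finite-outcome measurement: a family of effects summing to the unit effect on `S`. -/
def IsMeasurement {V : Type*} [AddCommGroup V] [Module ℝ V] (S : Set V) {X : Type*} [Fintype X]
    (A : X → (V →ᵃ[ℝ] ℝ)) : Prop :=
  (∀ x, IsEffect S (A x)) ∧ ∀ s ∈ S, ∑ x, A x s = 1

/-- A joint measurement of `A` and `B`: a measurement on `X × Y` whose marginals are `A`, `B`. -/
def IsJointMeasurement {V : Type*} [AddCommGroup V] [Module ℝ V] (S : Set V)
    {X Y : Type*} [Fintype X] [Fintype Y]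
    (A : X → (V →ᵃ[ℝ] ℝ)) (B : Y → (V →ᵃ[ℝ] ℝ)) (C : X × Y → (V →ᵃ[ℝ] ℝ)) : Prop :=
  IsMeasurement S C ∧ (∀ x, ∀ s ∈ S, ∑ y, C (x, y) s = A x s) ∧
    (∀ y, ∀ s ∈ S, ∑ x, C (x, y) s = B y s)

/-- `A` is `α`-intersubjective: every joint measurement of `A` with itself has diagonal
weight at least `α · 1_S`. -/
def Intersubjective {V : Type*} [AddCommGroup V] [Module ℝ V] (S : Set V) {X : Type*} [Fintype X]
    (α : ℝ) (A : X → (V →ᵃ[ℝ] ℝ)) : Prop :=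
  ∀ C : X × X → (V →ᵃ[ℝ] ℝ), IsJointMeasurement S A A C → ∀ s ∈ S, α ≤ ∑ x, C (x, x) s

/-- `A` is `α`-sharp: for distinct outcomes `x ≠ x'`, any effect below both `A x` and `A x'`
is below `(1 - α) · 1_S`. -/
def SharpMeasurement {V : Type*} [AddCommGroup V] [Module ℝ V] (S : Set V) {X : Type*} [Fintype X]
    (α : ℝ) (A : X → (V →ᵃ[ℝ] ℝ)) : Prop :=
  ∀ x x', x ≠ x' → ∀ b : V →ᵃ[ℝ] ℝ, IsEffect S b → (∀ s ∈ S, b s ≤ A x s) →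
    (∀ s ∈ S, b s ≤ A x' s) → ∀ s ∈ S, b s ≤ 1 - α

/-- an `α`-sharp measurement with `n` outcomes is
`(1 - (n² - n)(1 - α))`-intersubjective. -/
theorem sharp_implies_intersubjective {V : Type*} [NormedAddCommGroup V] [NormedSpace ℝ V]
    (S : Set V) (hSconv : Convex ℝ S) (hScomp : IsCompact S)
    {X : Type*} [Fintype X] {n : ℕ} (hn : Fintype.card X = n)
    (A : X → (V →ᵃ[ℝ] ℝ)) (hA : IsMeasurement S A) (α : ℝ)
    (hsharp : SharpMeasurement S α A) :
    Intersubjective S (1 - ((n : ℝ) ^ 2 - n) * (1 - α)) A := by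
  classical
  rintro C ⟨⟨hCeff, hCsum⟩, hm1, hm2⟩ s hs
  have hoff : ∀ p : X × X, p.1 ≠ p.2 → C p s ≤ 1 - α := by
    rintro ⟨x, x'⟩ hne
    refine hsharp x x' hne (C (x, x')) (hCeff _) ?_ ?_ s hs
    · intro t ht
      rw [← hm1 x t ht]
      exact Finset.single_le_sum (fun y _ => (hCeff (x, y) t ht).1) (Finset.mem_univ x')
    · intro t ht
      rw [← hm2 x' t ht]
      exact Finset.single_le_sum (fun y _ => (hCeff (y, x') t ht).1) (Finset.mem_univ x)
  have htotal : ∑ p : X × X, C p s = 1 := hCsum s hs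
  have hsplit : ∑ p ∈ (Finset.univ : Finset X).diag, C p s
      + ∑ p ∈ (Finset.univ : Finset X).offDiag, C p s = 1 := by
    rw [← Finset.sum_union (Finset.disjoint_diag_offDiag _), Finset.diag_union_offDiag,
      Finset.univ_product_univ, htotal]
  have hdiag : ∑ p ∈ (Finset.univ : Finset X).diag, C p s = ∑ x, C (x, x) s := by
    refine Finset.sum_nbij' Prod.fst (fun x => (x, x)) ?_ ?_ ?_ ?_ ?_ <;>
      simp +contextual [Finset.mem_diag, Prod.ext_iff]
  have hcard : (((Finset.univ : Finset X).offDiag.card : ℝ)) = (n : ℝ) ^ 2 - n := by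
    rw [Finset.offDiag_card, Finset.card_univ, hn]
    have h1 : n ≤ n * n := by nlinarith
    push_cast [Nat.cast_sub h1]
    ring
  have hbound : ∑ p ∈ (Finset.univ : Finset X).offDiag, C p s ≤ ((n : ℝ) ^ 2 - n) * (1 - α) := by
    calc ∑ p ∈ (Finset.univ : Finset X).offDiag, C p s
        ≤ ∑ _p ∈ (Finset.univ : Finset X).offDiag, (1 - α) :=
          Finset.sum_le_sum fun p hp => hoff p (Finset.mem_offDiag.mp hp).2.2
      _ = (((Finset.univ : Finset X).offDiag.card : ℝ)) * (1 - α) := by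
          rw [Finset.sum_const, nsmul_eq_mul]
      _ = ((n : ℝ) ^ 2 - n) * (1 - α) := by rw [hcard]
  linarith [hsplit, hdiag]
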